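/- Let w : (0,∞) → ℝ be twice continuously differentiable, and define v : (0,π) → ℝ by v(R) = w(tan(R/2)) / (1 + cos R)², so that v(2·arctan r) = ((1+r²)/2)²·w(r). Then for every r > 0, writing R = 2·arctan r, one has (2/(1+r²))² · (1/sin²R) · d/dR ( sin²R · v′(R) ) = ((1+r²)/2)² · ( w″(r) + (2/r)·w′(r) ) + 3·((1+r²)/2) · r · w′(r) + 6·((1+r²)/2) · w(r). -/

import Mathlib

open Real Set Filter

private lemma tanHalf_hasDerivAt {S : ℝ} (hS : S ∈ Set.Ioo 0 π) :
    HasDerivAt (fun S : ℝ => Real.tan (S / 2)) ((1 + Real.tan (S / 2) ^ 2) / 2) S := by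
  have hhalf : S / 2 ∈ Set.Ioo (-(π / 2)) (π / 2) :=
    ⟨by nlinarith [hS.1, pi_pos], by nlinarith [hS.2]⟩
  have hc : Real.cos (S / 2) ≠ 0 := (Real.cos_pos_of_mem_Ioo hhalf).ne'
  have h := (Real.hasDerivAt_tan hc).comp S ((hasDerivAt_id S).div_const 2)
  have hval : 1 / Real.cos (S / 2) ^ 2 * (1 / 2) = (1 + Real.tan (S / 2) ^ 2) / 2 := by
    have h1 : 1 + Real.tan (S / 2) ^ 2 = (Real.cos (S / 2) ^ 2)⁻¹ := by
      rw [← Real.inv_one_add_tan_sq hc, inv_inv]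
    rw [h1]; ring
  rw [hval] at h
  exact h

private lemma sinsq_mul_deriv (w w' : ℝ → ℝ)
    (hw : ∀ r : ℝ, 0 < r → HasDerivAt w (w' r) r)
    (v : ℝ → ℝ)
    (hv : ∀ R : ℝ, v R = w (Real.tan (R / 2)) / (1 + Real.cos R) ^ 2)
    {S : ℝ} (hS : S ∈ Set.Ioo 0 π) :
    Real.sin S ^ 2 * deriv v S
      = Real.tan (S / 2) ^ 2 * (1 + Real.tan (S / 2) ^ 2) / 2 * w' (Real.tan (S / 2))
        + 2 * Real.tan (S / 2) ^ 3 * w (Real.tan (S / 2)) := by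
  have hhalf : S / 2 ∈ Set.Ioo (-(π / 2)) (π / 2) :=
    ⟨by nlinarith [hS.1, pi_pos], by nlinarith [hS.2]⟩
  have hcpos : 0 < Real.cos (S / 2) := Real.cos_pos_of_mem_Ioo hhalf
  have htpos : 0 < Real.tan (S / 2) :=
    Real.tan_pos_of_pos_of_lt_pi_div_two (by nlinarith [hS.1]) (by nlinarith [hS.2])
  have h1 : 1 + Real.tan (S / 2) ^ 2 = (Real.cos (S / 2) ^ 2)⁻¹ := by
    rw [← Real.inv_one_add_tan_sq hcpos.ne', inv_inv]
  -- v agrees near S with a nicer function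
  have hveq : v =ᶠ[nhds S]
      (fun S : ℝ => w (Real.tan (S / 2)) * (1 + Real.tan (S / 2) ^ 2) ^ 2 / 4) := by
    refine Filter.eventually_of_mem (isOpen_Ioo.mem_nhds hS) (fun x hx => ?_)
    have hhx : x / 2 ∈ Set.Ioo (-(π / 2)) (π / 2) :=
      ⟨by nlinarith [hx.1, pi_pos], by nlinarith [hx.2]⟩
    have hcx : 0 < Real.cos (x / 2) := Real.cos_pos_of_mem_Ioo hhx
    have h1x : 1 + Real.tan (x / 2) ^ 2 = (Real.cos (x / 2) ^ 2)⁻¹ := by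
      rw [← Real.inv_one_add_tan_sq hcx.ne', inv_inv]
    have hcosx : 1 + Real.cos x = 2 * Real.cos (x / 2) ^ 2 := by
      have hxx : x = 2 * (x / 2) := by ring
      rw [hxx, Real.cos_two_mul]; ring
    simp only [hv x, hcosx, h1x]
    have hc2 : Real.cos (x / 2) ≠ 0 := hcx.ne'
    field_simp
    ring
  have hQ := (((hw _ htpos).mul (((hasDerivAt_pow 2 (Real.tan (S / 2))).const_add
      1).pow 2)).div_const 4).comp S (tanHalf_hasDerivAt hS)
  have hvd := hQ.congr_of_eventuallyEq hveq
  have hsinS : Real.sin S = 2 * Real.sin (S / 2) * Real.cos (S / 2) := by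
    have hxx : S = 2 * (S / 2) := by ring
    rw [hxx, Real.sin_two_mul]; ring
  have hsin2 : Real.sin S ^ 2
      = 4 * Real.tan (S / 2) ^ 2 / (1 + Real.tan (S / 2) ^ 2) ^ 2 := by
    rw [h1, hsinS, Real.tan_eq_sin_div_cos]
    field_simp
    ring
  rw [hvd.deriv, hsin2]
  have hne : (1 + Real.tan (S / 2) ^ 2) ≠ 0 := by positivity
  field_simp
  simp only [Pi.pow_apply]
  ring

/-- The operator `H₁` of the Penrose transform on radial functions:
let `w` be twice differentiable on `(0,∞)` with derivatives `w'`, `w''`, and define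
`v(R) = w(tan(R/2))/(1 + cos R)²` (so that `v(2 arctan r) = ((1+r²)/2)² w(r)`).
Then for `r > 0`, writing `R = 2 arctan r`,
`(2/(1+r²))² (1/sin²R) d/dR (sin²R v′(R))
  = ((1+r²)/2)² (w″(r) + (2/r) w′(r)) + 3((1+r²)/2) r w′(r) + 6((1+r²)/2) w(r)`. -/
theorem penrose_H1_radial (w w' w'' : ℝ → ℝ)
    (hw : ∀ r : ℝ, 0 < r → HasDerivAt w (w' r) r)
    (hw' : ∀ r : ℝ, 0 < r → HasDerivAt w' (w'' r) r)
    (v : ℝ → ℝ)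
    (hv : ∀ R : ℝ, v R = w (Real.tan (R / 2)) / (1 + Real.cos R) ^ 2)
    (r : ℝ) (hr : 0 < r) :
    (2 / (1 + r ^ 2)) ^ 2 *
        ((1 / Real.sin (2 * Real.arctan r) ^ 2) *
          deriv (fun S : ℝ => Real.sin S ^ 2 * deriv v S) (2 * Real.arctan r))
      = ((1 + r ^ 2) / 2) ^ 2 * (w'' r + (2 / r) * w' r)
          + 3 * (((1 + r ^ 2) / 2) * r * w' r) + 6 * (((1 + r ^ 2) / 2) * w r) := by
  set R₀ := 2 * Real.arctan r with hR₀def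
  have harc : 0 < Real.arctan r := by
    have := Real.arctan_strictMono hr
    rwa [Real.arctan_zero] at this
  have hR₀mem : R₀ ∈ Set.Ioo 0 π := by
    constructor
    · positivity
    · have := Real.arctan_lt_pi_div_two r
      rw [hR₀def]; linarith
  have htanR : Real.tan (R₀ / 2) = r := by
    have : R₀ / 2 = Real.arctan r := by rw [hR₀def]; ring
    rw [this, Real.tan_arctan]
  -- the function sin²S · deriv v S agrees with F near R₀
  have hGF : (fun S : ℝ => Real.sin S ^ 2 * deriv v S) =ᶠ[nhds R₀]
      (fun S : ℝ => Real.tan (S / 2) ^ 2 * (1 + Real.tan (S / 2) ^ 2) / 2 *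
          w' (Real.tan (S / 2)) + 2 * Real.tan (S / 2) ^ 3 * w (Real.tan (S / 2))) :=
    Filter.eventually_of_mem (isOpen_Ioo.mem_nhds hR₀mem)
      (fun x hx => sinsq_mul_deriv w w' hw v hv hx)
  -- derivative of the inner polynomial function P(t) = t²(1+t²)/2 · w'(t) + 2t³ · w(t)
  have hP := ((((hasDerivAt_pow 2 r).mul ((hasDerivAt_pow 2 r).const_add 1)).div_const
      2).mul (hw' r hr)).add (((hasDerivAt_pow 3 r).const_mul 2).mul (hw r hr))
  rw [← htanR] at hP
  have hF := hP.comp R₀ (tanHalf_hasDerivAt hR₀mem)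
  rw [htanR] at hF
  have hderiv : deriv (fun S : ℝ => Real.sin S ^ 2 * deriv v S) R₀
      = ((2 * r ^ 1 * (1 + r ^ 2) + r ^ 2 * (2 * r ^ 1)) / 2 * w' r
          + r ^ 2 * (1 + r ^ 2) / 2 * w'' r
          + (2 * (3 * r ^ 2) * w r + 2 * r ^ 3 * w' r)) * ((1 + r ^ 2) / 2) := by
    have hF' : HasDerivAt (fun S : ℝ => Real.tan (S / 2) ^ 2 * (1 + Real.tan (S / 2) ^ 2) / 2 *
        w' (Real.tan (S / 2)) + 2 * Real.tan (S / 2) ^ 3 * w (Real.tan (S / 2)))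
        ((((2:ℕ) * r ^ (2 - 1) * (1 + r ^ 2) + r ^ 2 * ((2:ℕ) * r ^ (2 - 1))) / 2 * w' r
          + r ^ 2 * (1 + r ^ 2) / 2 * w'' r
          + (2 * ((3:ℕ) * r ^ (3 - 1)) * w r + 2 * r ^ 3 * w' r)) * ((1 + r ^ 2) / 2)) R₀ := hF
    rw [hGF.deriv_eq, hF'.deriv]
    push_cast
    norm_num
  have hsinR : Real.sin R₀ ^ 2 = 4 * r ^ 2 / (1 + r ^ 2) ^ 2 := by
    rw [hR₀def, Real.sin_two_mul, Real.sin_arctan, Real.cos_arctan]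
    have hs : (0:ℝ) < Real.sqrt (1 + r ^ 2) := Real.sqrt_pos.2 (by positivity)
    have hsq : Real.sqrt (1 + r ^ 2) ^ 2 = 1 + r ^ 2 := Real.sq_sqrt (by positivity)
    field_simp
    linear_combination (-4 * (Real.sqrt (1 + r ^ 2) ^ 2 + 1 + r ^ 2)) * hsq
  rw [hderiv, hsinR]
  have h1 : (1 + r ^ 2) ≠ 0 := by positivity
  field_simp
  ring
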